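/- arXiv:2208.04798 — 2 statements merged into one kernel-verified Lean document; each statement's English description precedes it below -/
import Mathlib

section
/- Interpolated Fourier slice identities: Let f ∈ O_n and let α, β be real numbers with |α| < 1 and |β| < 1. Then for all real (η,ζ), f̂_{(1,α,β)}(η,ζ) = Σ_{(j,k) ∈ Z_p²} f̂(-α·j-β·k, j, k)·D_p(η-j)·D_p(ζ-k), and for all real (ξ,η), f̂_{(α,β,1)}(ξ,η) = Σ_{(j,k) ∈ Z_p²} f̂(j, k, -α·j-β·k)·D_p(ξ-j)·D_p(η-k). -/
open Complex MeasureTheory ProbabilityTheory BigOperators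

noncomputable section

namespace Tomo3D

/-- `Z_m`: the integers in `[-(m-1)/2, (m-1)/2]` (for odd `m`). -/
def Zf (m : ℕ) : Finset ℤ :=
  Finset.Icc (-(((m : ℤ) - 1) / 2)) (((m : ℤ) - 1) / 2)

/-- `Z_m²`. -/
def Zf2 (m : ℕ) : Finset (ℤ × ℤ) := Zf m ×ˢ Zf m

/-- The `p`-periodic Dirichlet kernel `D_p`. -/
def Dk (p : ℕ) (t : ℝ) : ℂ :=
  (p : ℂ)⁻¹ * ∑ l ∈ Zf p,
    Complex.exp (2 * (Real.pi : ℂ) * Complex.I * (l : ℂ) * (t : ℂ) / (p : ℂ))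

/-- The class `O_n`: objects supported in `Z_n³`. -/
def IsObj (n : ℕ) (f : ℤ → ℤ → ℤ → ℂ) : Prop :=
  ∀ i j k : ℤ, i ∉ Zf n ∨ j ∉ Zf n ∨ k ∉ Zf n → f i j k = 0

/-- Continuous interpolation `f̃` of an object. -/
def interp (n : ℕ) (f : ℤ → ℤ → ℤ → ℂ) (x y z : ℝ) : ℂ :=
  ∑ i ∈ Zf n, ∑ j ∈ Zf n, ∑ k ∈ Zf n,
    f i j k * Dk (2 * n - 1) (x - (i : ℝ)) * Dk (2 * n - 1) (y - (j : ℝ)) *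
      Dk (2 * n - 1) (z - (k : ℝ))

/-- Directions `(1,α,β)`, `(α,1,β)`, `(α,β,1)`. -/
inductive Dir
  | dx (α β : ℝ)
  | dy (α β : ℝ)
  | dz (α β : ℝ)

/-- Validity of a direction: the slopes satisfy `|α| < 1`, `|β| < 1`. -/
def Dir.valid : Dir → Prop
  | .dx α β => |α| < 1 ∧ |β| < 1
  | .dy α β => |α| < 1 ∧ |β| < 1
  | .dz α β => |α| < 1 ∧ |β| < 1

/-- The vector in `ℝ³` attached to a direction. -/
def Dir.toVec : Dir → ℝ × ℝ × ℝ
  | .dx α β => (1, α, β)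
  | .dy α β => (α, 1, β)
  | .dz α β => (α, β, 1)

/-- Two directions are parallel if one is a real scalar multiple of the other. -/
def Dir.Parallel (t t' : Dir) : Prop :=
  ∃ c : ℝ, t'.toVec = c • t.toVec ∨ t.toVec = c • t'.toVec

/-- Discrete projection of an object along a direction, regarded as a function on
`Z_{2n-1}²` extended by zero to `ℤ²`. -/
def proj (n : ℕ) (f : ℤ → ℤ → ℤ → ℂ) : Dir → ℤ × ℤ → ℂ
  | .dx α β => fun c =>
      if c ∈ Zf2 (2 * n - 1) then
        ∑ i ∈ Zf n, interp n f (i : ℝ) (α * (i : ℝ) + (c.1 : ℝ)) (β * (i : ℝ) + (c.2 : ℝ))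
      else 0
  | .dy α β => fun c =>
      if c ∈ Zf2 (2 * n - 1) then
        ∑ j ∈ Zf n, interp n f (α * (j : ℝ) + (c.1 : ℝ)) (j : ℝ) (β * (j : ℝ) + (c.2 : ℝ))
      else 0
  | .dz α β => fun c =>
      if c ∈ Zf2 (2 * n - 1) then
        ∑ k ∈ Zf n, interp n f (α * (k : ℝ) + (c.1 : ℝ)) (β * (k : ℝ) + (c.2 : ℝ)) (k : ℝ)
      else 0

/-- 3D discrete Fourier transform of an object (defined for all real frequencies). -/
def ft3 (n : ℕ) (f : ℤ → ℤ → ℤ → ℂ) (ξ η ζ : ℝ) : ℂ :=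
  ∑ i ∈ Zf n, ∑ j ∈ Zf n, ∑ k ∈ Zf n,
    f i j k *
      Complex.exp (-(2 * (Real.pi : ℂ) * Complex.I) *
        ((ξ : ℂ) * (i : ℂ) + (η : ℂ) * (j : ℂ) + (ζ : ℂ) * (k : ℂ)) /
          (((2 * n - 1 : ℕ) : ℂ)))

/-- 2D discrete Fourier transform of a projection (defined for all real frequencies). -/
def ft2 (n : ℕ) (g : ℤ × ℤ → ℂ) (η ζ : ℝ) : ℂ :=
  ∑ c ∈ Zf2 (2 * n - 1),
    g c *
      Complex.exp (-(2 * (Real.pi : ℂ) * Complex.I) *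
        ((η : ℂ) * (c.1 : ℂ) + (ζ : ℂ) * (c.2 : ℂ)) / (((2 * n - 1 : ℕ) : ℂ)))

/-- Diffraction pattern of `h : Z_p² → ℂ`. -/
def dpat (p : ℕ) (h : ℤ × ℤ → ℂ) (w : ℝ × ℝ) : ℝ :=
  ‖∑ m ∈ Zf2 p,
      h m * Complex.exp (-(2 * (Real.pi : ℂ) * Complex.I) *
        ((m.1 : ℂ) * (w.1 : ℂ) + (m.2 : ℂ) * (w.2 : ℂ)))‖ ^ 2

/-- `h₁` and `h₂` produce the same diffraction pattern (on `[-1/2,1/2]²`). -/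
def SameDP (p : ℕ) (h₁ h₂ : ℤ × ℤ → ℂ) : Prop :=
  ∀ w : ℝ × ℝ, w.1 ∈ Set.Icc (-(1 : ℝ) / 2) (1 / 2) →
    w.2 ∈ Set.Icc (-(1 : ℝ) / 2) (1 / 2) → dpat p h₁ w = dpat p h₂ w

/-- Autocorrelation of `h : ℤ² → ℂ`. -/
def autocorr (h : ℤ × ℤ → ℂ) (m : ℤ × ℤ) : ℂ :=
  ∑' m' : ℤ × ℤ, h (m' + m) * (starRingEnd ℂ) (h m')

/-- The random phase mask `μ(m) = exp(i φ(m))`. -/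
def mask {Ω : Type*} (φ : ℤ × ℤ → Ω → ℝ) (ω : Ω) (m : ℤ × ℤ) : ℂ :=
  Complex.exp (Complex.I * ((φ m ω : ℝ) : ℂ))

/-- The Mask Assumption: the phases `φ(m)`, `m ∈ Z_p²`, are independent real random
variables whose laws have no atoms. -/
def MaskAssumption {Ω : Type*} [MeasurableSpace Ω] (P : Measure Ω) (p : ℕ)
    (φ : ℤ × ℤ → Ω → ℝ) : Prop :=
  (∀ m, Measurable (φ m)) ∧
  iIndepFun (m := fun _ : {m : ℤ × ℤ // m ∈ Zf2 p} => (inferInstance : MeasurableSpace ℝ))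
    (fun m : {m : ℤ × ℤ // m ∈ Zf2 p} => φ m.1) P ∧
  ∀ m ∈ Zf2 p, ∀ r : ℝ, P {ω | φ m ω = r} = 0

/-- The uniform random phase mask: independent phases, uniformly distributed on `[0,2π)`. -/
def UniformMask {Ω : Type*} [MeasurableSpace Ω] (P : Measure Ω) (p : ℕ)
    (φ : ℤ × ℤ → Ω → ℝ) : Prop :=
  (∀ m, Measurable (φ m)) ∧
  iIndepFun (m := fun _ : {m : ℤ × ℤ // m ∈ Zf2 p} => (inferInstance : MeasurableSpace ℝ))
    (fun m : {m : ℤ × ℤ // m ∈ Zf2 p} => φ m.1) P ∧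
  ∀ m ∈ Zf2 p,
    P.map (φ m) = (ENNReal.ofReal (2 * Real.pi))⁻¹ • volume.restrict (Set.Ico 0 (2 * Real.pi))

/-- The representative of `x` modulo `p` lying in `Z_p` (for odd `p`). -/
def zmodRep (p : ℕ) (x : ℤ) : ℤ := (x + ((p : ℤ) - 1) / 2) % (p : ℤ) - ((p : ℤ) - 1) / 2

/-- `p`-periodic extension to `ℤ²` of a function on `Z_p²`. -/
def perExt (p : ℕ) (h : ℤ × ℤ → ℂ) (m : ℤ × ℤ) : ℂ := h (zmodRep p m.1, zmodRep p m.2)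

/-- A function on `ℤ²` is supported on a line. -/
def SuppOnLine (h : ℤ × ℤ → ℂ) : Prop :=
  ∃ a b : ℝ × ℝ, ∀ m : ℤ × ℤ, h m ≠ 0 →
    ∃ s : ℝ, ((m.1 : ℝ), (m.2 : ℝ)) = (a.1 + s * b.1, a.2 + s * b.2)

/-- The diversity condition for a family of slope pairs. -/
def Diversity (n : ℕ) (α β : Fin n → ℝ) : Prop :=
  (∀ l, |α l| < 1 ∧ |β l| < 1) ∧
  ∀ ξη : ℤ × ℤ, ξη ∈ Zf2 (2 * n - 1) → ξη ≠ (0, 0) →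
    ∀ l l' : Fin n, l ≠ l' →
      ¬ ∃ z : ℤ,
        α l * (ξη.1 : ℝ) + β l * (ξη.2 : ℝ) - (α l' * (ξη.1 : ℝ) + β l' * (ξη.2 : ℝ))
          = (z : ℝ) * (((2 * n - 1 : ℕ) : ℝ))

/-- The 3D Itoh condition for `κ`: variation less than `π/κ` between adjacent grid points. -/
def Itoh (n : ℕ) (κ : ℝ) (f : ℤ → ℤ → ℤ → ℂ) : Prop :=
  ∀ i j k i' j' k' : ℤ,
    i ∈ Zf n → j ∈ Zf n → k ∈ Zf n → i' ∈ Zf n → j' ∈ Zf n → k' ∈ Zf n →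
    ((|i - i'| = 1 ∧ j = j' ∧ k = k') ∨ (i = i' ∧ |j - j'| = 1 ∧ k = k') ∨
      (i = i' ∧ j = j' ∧ |k - k'| = 1)) →
    ‖f i j k - f i' j' k'‖ < Real.pi / κ

/-- The common set `L_{t,t'}(f)` for directions `t = (α,β,1)` and `t' = (α',β',1)`. -/
def commonSet (n : ℕ) (f : ℤ → ℤ → ℤ → ℂ) (α β α' β' : ℝ) : Set ((ℝ × ℝ) × (ℝ × ℝ)) :=
  {kk | ft2 n (proj n f (Dir.dz α β)) kk.1.1 kk.1.2
      = ft2 n (proj n f (Dir.dz α' β')) kk.2.1 kk.2.2}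

/-- `k` has a slope (its first component is nonzero) which is not a fraction over `Z_p`. -/
def BadSlope (p : ℕ) (k : ℝ × ℝ) : Prop :=
  k.1 ≠ 0 ∧ ∀ a b : ℤ, a ∈ Zf p → b ∈ Zf p → b ≠ 0 → k.2 / k.1 ≠ (a : ℝ) / (b : ℝ)

/-- Sector condition: every nonzero value of `h` has phase angle in `[a, b]` (mod 2π). -/
def Sector (a b : ℝ) (h : ℤ × ℤ → ℂ) : Prop :=
  ∀ m : ℤ × ℤ, h m ≠ 0 →
    ∃ θ ∈ Set.Icc a b, h m = ((‖h m‖ : ℝ) : ℂ) * Complex.exp (Complex.I * (θ : ℂ))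

open scoped Classical in
/-- Number of points of `Z_p²` where `h` does not vanish. -/
def nnz (p : ℕ) (h : ℤ × ℤ → ℂ) : ℕ := ((Zf2 p).filter fun m => h m ≠ 0).card

/-! ### Auxiliary lemmas for the Fourier slice theorem -/

lemma zf_mem {m : ℕ} {x : ℤ} :
    x ∈ Zf m ↔ -(((m : ℤ) - 1) / 2) ≤ x ∧ x ≤ ((m : ℤ) - 1) / 2 := by
  simp [Zf, Finset.mem_Icc]

lemma zf_card {p : ℕ} (hp : Odd p) : (Zf p).card = p := by
  rcases hp with ⟨q, hq⟩
  rw [Zf, Int.card_Icc]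
  omega

lemma sum_exp_eq {p : ℕ} (hp : Odd p) (m : ℤ) :
    ∑ l ∈ Zf p, Complex.exp (2 * (Real.pi : ℂ) * Complex.I * (l : ℂ) * (m : ℂ) / (p : ℂ)) =
      if (p : ℤ) ∣ m then (p : ℂ) else 0 := by
  have hp0 : 0 < p := hp.pos
  obtain ⟨q, hq2⟩ := id hp
  have hpc : (p : ℂ) ≠ 0 := by exact_mod_cast hp0.ne'
  set ω : ℂ := Complex.exp (2 * (Real.pi : ℂ) * Complex.I * (m : ℂ) / (p : ℂ)) with hω
  have hω0 : ω ≠ 0 := Complex.exp_ne_zero _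
  have hterm : ∀ l : ℤ,
      Complex.exp (2 * (Real.pi : ℂ) * Complex.I * (l : ℂ) * (m : ℂ) / (p : ℂ)) = ω ^ l := by
    intro l
    rw [hω, ← Complex.exp_int_mul]
    congr 1; ring
  simp only [hterm]
  by_cases hdvd : (p : ℤ) ∣ m
  · obtain ⟨k, hk⟩ := hdvd
    have hω1 : ω = 1 := by
      rw [hω, hk]
      have harg : 2 * (Real.pi : ℂ) * Complex.I * ((((p : ℤ) * k : ℤ)) : ℂ) / (p : ℂ)
          = (k : ℂ) * (2 * (Real.pi : ℂ) * Complex.I) := by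
        push_cast
        field_simp
      rw [harg, Complex.exp_int_mul_two_pi_mul_I]
    rw [if_pos ⟨k, hk⟩]
    simp [hω1, zf_card hp]
  · have hωp : ω ^ (p : ℕ) = 1 := by
      rw [hω, ← Complex.exp_nat_mul]
      have harg : (p : ℂ) * (2 * (Real.pi : ℂ) * Complex.I * (m : ℂ) / (p : ℂ))
          = (m : ℂ) * (2 * (Real.pi : ℂ) * Complex.I) := by
        field_simp
      rw [harg, Complex.exp_int_mul_two_pi_mul_I]
    have hω1 : ω ≠ 1 := by
      intro h
      rw [hω, Complex.exp_eq_one_iff] at h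
      obtain ⟨k, hk⟩ := h
      apply hdvd
      refine ⟨k, ?_⟩
      have h2 : (2 * (Real.pi : ℂ) * Complex.I) ≠ 0 := by
        simp [Real.pi_ne_zero, Complex.I_ne_zero]
      rw [div_eq_iff hpc] at hk
      have hmc : (m : ℂ) = ((p * k : ℤ) : ℂ) := by
        apply mul_left_cancel₀ h2
        push_cast
        linear_combination hk
      exact_mod_cast hmc
    rw [if_neg hdvd]
    have hre : ∑ l ∈ Zf p, ω ^ l
        = ∑ t ∈ Finset.range p, ω ^ ((t : ℤ) - (((p : ℤ) - 1) / 2)) := by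
      refine Finset.sum_bij' (fun l _ => (l + ((p : ℤ) - 1) / 2).toNat)
        (fun t _ => (t : ℤ) - ((p : ℤ) - 1) / 2) ?_ ?_ ?_ ?_ ?_
      · intro a ha
        rw [zf_mem] at ha
        rw [Finset.mem_range]
        omega
      · intro a ha
        rw [Finset.mem_range] at ha
        rw [zf_mem]
        omega
      · intro a ha
        rw [zf_mem] at ha
        omega
      · intro a ha
        rw [Finset.mem_range] at ha
        omega
      · intro a ha
        rw [zf_mem] at ha
        congr 1
        omega
    rw [hre]
    have : ∀ t ∈ Finset.range p, ω ^ ((t : ℤ) - (((p : ℤ) - 1) / 2))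
        = ω ^ (t : ℕ) / ω ^ ((((p : ℤ) - 1) / 2)) := by
      intro t _
      rw [zpow_sub₀ hω0, zpow_natCast]
    rw [Finset.sum_congr rfl this, ← Finset.sum_div, geom_sum_eq hω1, hωp, sub_self,
      zero_div, zero_div]

lemma Dk_int {p : ℕ} (hp : Odd p) (m : ℤ) :
    Dk p ((m : ℤ) : ℝ) = if (p : ℤ) ∣ m then 1 else 0 := by
  have hpc : (p : ℂ) ≠ 0 := by exact_mod_cast hp.pos.ne'
  rw [Dk]
  simp only [Complex.ofReal_intCast]
  rw [sum_exp_eq hp m]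
  split
  · rw [inv_mul_cancel₀ hpc]
  · rw [mul_zero]

lemma Dk_neg (p : ℕ) (t : ℝ) : Dk p (-t) = Dk p t := by
  unfold Dk
  congr 1
  refine Finset.sum_bij' (fun l _ => -l) (fun l _ => -l) ?_ ?_ ?_ ?_ ?_
  · intro a ha; rw [zf_mem] at ha ⊢; omega
  · intro a ha; rw [zf_mem] at ha ⊢; omega
  · intro a _; ring
  · intro a _; ring
  · intro a _
    congr 1
    push_cast
    ring

lemma Dk_delta {n : ℕ} (hn : 1 ≤ n) {i i' : ℤ} (hi : i ∈ Zf n) (hi' : i' ∈ Zf n) :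
    Dk (2 * n - 1) ((i : ℝ) - (i' : ℝ)) = if i = i' then 1 else 0 := by
  have hodd : Odd (2 * n - 1) := ⟨n - 1, by omega⟩
  have h1 : ((i : ℝ) - (i' : ℝ)) = (((i - i' : ℤ)) : ℝ) := by push_cast; ring
  rw [h1, Dk_int hodd]
  have hb : ((2 * n - 1 : ℕ) : ℤ) = 2 * (n : ℤ) - 1 := by omega
  rw [zf_mem] at hi hi'
  by_cases h : i = i'
  · simp [h]
  · rw [if_neg h, if_neg]
    intro hdvd
    rw [hb] at hdvd
    have habs : |i - i'| < 2 * (n : ℤ) - 1 := by rw [abs_lt]; constructor <;> omega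
    have := Int.eq_zero_of_abs_lt_dvd hdvd habs
    omega

lemma interp_fst {n : ℕ} (hn : 1 ≤ n) (f : ℤ → ℤ → ℤ → ℂ) {i : ℤ} (hi : i ∈ Zf n)
    (y z : ℝ) :
    interp n f (i : ℝ) y z
      = ∑ j ∈ Zf n, ∑ k ∈ Zf n,
          f i j k * Dk (2 * n - 1) (y - (j : ℝ)) * Dk (2 * n - 1) (z - (k : ℝ)) := by
  rw [interp, Finset.sum_eq_single_of_mem i hi]
  · refine Finset.sum_congr rfl fun j _ => Finset.sum_congr rfl fun k _ => ?_
    rw [Dk_delta hn hi hi, if_pos rfl, mul_one]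
  · intro i' hi' hne
    apply Finset.sum_eq_zero; intro j _
    apply Finset.sum_eq_zero; intro k _
    rw [Dk_delta hn hi hi', if_neg fun h => hne h.symm]
    simp

lemma interp_lst {n : ℕ} (hn : 1 ≤ n) (f : ℤ → ℤ → ℤ → ℂ) {k : ℤ} (hk : k ∈ Zf n)
    (x y : ℝ) :
    interp n f x y (k : ℝ)
      = ∑ i ∈ Zf n, ∑ j ∈ Zf n,
          f i j k * Dk (2 * n - 1) (x - (i : ℝ)) * Dk (2 * n - 1) (y - (j : ℝ)) := by
  rw [interp]
  refine Finset.sum_congr rfl fun i _ => Finset.sum_congr rfl fun j _ => ?_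
  rw [Finset.sum_eq_single_of_mem k hk]
  · rw [Dk_delta hn hk hk, if_pos rfl, mul_one]
  · intro k' hk' hne
    rw [Dk_delta hn hk hk', if_neg fun h => hne h.symm]
    simp

lemma sum_pair_mul (S : Finset ℤ) (a : ℂ) (A B : ℤ → ℂ) :
    ∑ c ∈ S ×ˢ S, a * A c.1 * B c.2 = a * (∑ x ∈ S, A x) * (∑ y ∈ S, B y) := by
  rw [Finset.sum_product, mul_assoc, Finset.sum_mul_sum, Finset.mul_sum]
  refine Finset.sum_congr rfl fun x _ => ?_
  rw [Finset.mul_sum]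
  exact Finset.sum_congr rfl fun y _ => by ring

lemma core_slice {p : ℕ} (hp : Odd p) (x η : ℝ) :
    ∑ c ∈ Zf p, Dk p (x + (c : ℝ)) *
        Complex.exp (-(2 * (Real.pi : ℂ) * Complex.I) * ((η : ℂ) * (c : ℂ)) / (p : ℂ))
      = ∑ l ∈ Zf p,
          Complex.exp (2 * (Real.pi : ℂ) * Complex.I * ((l : ℂ) * (x : ℂ)) / (p : ℂ)) *
            Dk p (η - (l : ℝ)) := by
  have step1 : ∀ c ∈ Zf p, Dk p (x + (c : ℝ)) *
        Complex.exp (-(2 * (Real.pi : ℂ) * Complex.I) * ((η : ℂ) * (c : ℂ)) / (p : ℂ))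
      = ∑ l ∈ Zf p, (p : ℂ)⁻¹ *
          (Complex.exp (2 * (Real.pi : ℂ) * Complex.I * ((l : ℂ) * (x : ℂ)) / (p : ℂ)) *
            Complex.exp (2 * (Real.pi : ℂ) * Complex.I * (c : ℂ) * (((l : ℝ) - η : ℝ) : ℂ) / (p : ℂ))) := by
    intro c _
    rw [Dk, Finset.mul_sum, Finset.sum_mul]
    refine Finset.sum_congr rfl fun l _ => ?_
    rw [mul_assoc, ← Complex.exp_add, ← Complex.exp_add]
    congr 2
    push_cast
    ring
  rw [Finset.sum_congr rfl step1, Finset.sum_comm]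
  refine Finset.sum_congr rfl fun l _ => ?_
  have hneg : η - (l : ℝ) = -((l : ℝ) - η) := by ring
  rw [hneg, Dk_neg, Dk]
  simp only [Finset.mul_sum]
  refine Finset.sum_congr rfl fun c _ => by ring

/-- Interpolated Fourier slice identities. -/
theorem interpolated_fourier_slice
    (n : ℕ) (hn : Odd n) (hn3 : 3 ≤ n)
    (f : ℤ → ℤ → ℤ → ℂ) (hf : IsObj n f)
    (α β : ℝ) (hα : |α| < 1) (hβ : |β| < 1) :
    (∀ η ζ : ℝ, ft2 n (proj n f (Dir.dx α β)) η ζ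
        = ∑ c ∈ Zf2 (2 * n - 1),
            ft3 n f (-α * (c.1 : ℝ) - β * (c.2 : ℝ)) (c.1 : ℝ) (c.2 : ℝ) *
              Dk (2 * n - 1) (η - (c.1 : ℝ)) * Dk (2 * n - 1) (ζ - (c.2 : ℝ))) ∧
    (∀ ξ η : ℝ, ft2 n (proj n f (Dir.dz α β)) ξ η
        = ∑ c ∈ Zf2 (2 * n - 1),
            ft3 n f (c.1 : ℝ) (c.2 : ℝ) (-α * (c.1 : ℝ) - β * (c.2 : ℝ)) *
              Dk (2 * n - 1) (ξ - (c.1 : ℝ)) * Dk (2 * n - 1) (η - (c.2 : ℝ))) := by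
  have hn1 : 1 ≤ n := by omega
  have hodd : Odd (2 * n - 1) := ⟨n - 1, by omega⟩
  constructor
  · intro η ζ
    calc ft2 n (proj n f (Dir.dx α β)) η ζ
        = ∑ c ∈ Zf2 (2 * n - 1), ∑ i ∈ Zf n, ∑ j ∈ Zf n, ∑ k ∈ Zf n,
            f i j k *
              (Dk (2 * n - 1) ((α * (i : ℝ) - (j : ℝ)) + (c.1 : ℝ)) * Complex.exp (-(2 * (Real.pi : ℂ) * Complex.I) * ((η : ℂ) * (c.1 : ℂ)) / ((2 * n - 1 : ℕ) : ℂ))) *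
              (Dk (2 * n - 1) ((β * (i : ℝ) - (k : ℝ)) + (c.2 : ℝ)) * Complex.exp (-(2 * (Real.pi : ℂ) * Complex.I) * ((ζ : ℂ) * (c.2 : ℂ)) / ((2 * n - 1 : ℕ) : ℂ))) := by
          rw [ft2]
          refine Finset.sum_congr rfl fun c hc => ?_
          simp only [proj]
          rw [if_pos hc, Finset.sum_mul]
          refine Finset.sum_congr rfl fun i hi => ?_
          rw [interp_fst hn1 f hi, Finset.sum_mul]
          refine Finset.sum_congr rfl fun j hj => ?_
          rw [Finset.sum_mul]
          refine Finset.sum_congr rfl fun k hk => ?_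
          rw [show (α * (i : ℝ) + (c.1 : ℝ) - (j : ℝ)) = (α * (i : ℝ) - (j : ℝ)) + (c.1 : ℝ) from by ring,
              show (β * (i : ℝ) + (c.2 : ℝ) - (k : ℝ)) = (β * (i : ℝ) - (k : ℝ)) + (c.2 : ℝ) from by ring,
              show Complex.exp (-(2 * (Real.pi : ℂ) * Complex.I) *
                  ((η : ℂ) * (c.1 : ℂ) + (ζ : ℂ) * (c.2 : ℂ)) / ((2 * n - 1 : ℕ) : ℂ))
                = Complex.exp (-(2 * (Real.pi : ℂ) * Complex.I) * ((η : ℂ) * (c.1 : ℂ)) / ((2 * n - 1 : ℕ) : ℂ)) * Complex.exp (-(2 * (Real.pi : ℂ) * Complex.I) * ((ζ : ℂ) * (c.2 : ℂ)) / ((2 * n - 1 : ℕ) : ℂ)) from by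
                rw [← Complex.exp_add]; congr 1; ring]
          ring
      _ = ∑ i ∈ Zf n, ∑ j ∈ Zf n, ∑ k ∈ Zf n,
            f i j k *
              (∑ l ∈ Zf (2 * n - 1), Dk (2 * n - 1) ((α * (i : ℝ) - (j : ℝ)) + (l : ℝ)) * Complex.exp (-(2 * (Real.pi : ℂ) * Complex.I) * ((η : ℂ) * (l : ℂ)) / ((2 * n - 1 : ℕ) : ℂ))) *
              (∑ m ∈ Zf (2 * n - 1), Dk (2 * n - 1) ((β * (i : ℝ) - (k : ℝ)) + (m : ℝ)) * Complex.exp (-(2 * (Real.pi : ℂ) * Complex.I) * ((ζ : ℂ) * (m : ℂ)) / ((2 * n - 1 : ℕ) : ℂ))) := by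
          rw [Finset.sum_comm]
          refine Finset.sum_congr rfl fun i _ => ?_
          rw [Finset.sum_comm]
          refine Finset.sum_congr rfl fun j _ => ?_
          rw [Finset.sum_comm]
          refine Finset.sum_congr rfl fun k _ => ?_
          rw [Zf2]
          exact sum_pair_mul (Zf (2 * n - 1)) (f i j k)
            (fun l => Dk (2 * n - 1) ((α * (i : ℝ) - (j : ℝ)) + (l : ℝ)) * Complex.exp (-(2 * (Real.pi : ℂ) * Complex.I) * ((η : ℂ) * (l : ℂ)) / ((2 * n - 1 : ℕ) : ℂ)))
            (fun m => Dk (2 * n - 1) ((β * (i : ℝ) - (k : ℝ)) + (m : ℝ)) * Complex.exp (-(2 * (Real.pi : ℂ) * Complex.I) * ((ζ : ℂ) * (m : ℂ)) / ((2 * n - 1 : ℕ) : ℂ)))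
      _ = ∑ i ∈ Zf n, ∑ j ∈ Zf n, ∑ k ∈ Zf n,
            f i j k *
              (∑ l ∈ Zf (2 * n - 1), Complex.exp (2 * (Real.pi : ℂ) * Complex.I * ((l : ℂ) * ((α * (i : ℝ) - (j : ℝ) : ℝ) : ℂ)) / ((2 * n - 1 : ℕ) : ℂ)) * Dk (2 * n - 1) (η - (l : ℝ))) *
              (∑ m ∈ Zf (2 * n - 1), Complex.exp (2 * (Real.pi : ℂ) * Complex.I * ((m : ℂ) * ((β * (i : ℝ) - (k : ℝ) : ℝ) : ℂ)) / ((2 * n - 1 : ℕ) : ℂ)) * Dk (2 * n - 1) (ζ - (m : ℝ))) := by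
          refine Finset.sum_congr rfl fun i _ => Finset.sum_congr rfl fun j _ =>
            Finset.sum_congr rfl fun k _ => ?_
          rw [core_slice hodd (α * (i : ℝ) - (j : ℝ)) η, core_slice hodd (β * (i : ℝ) - (k : ℝ)) ζ]
      _ = ∑ c ∈ Zf2 (2 * n - 1), ∑ i ∈ Zf n, ∑ j ∈ Zf n, ∑ k ∈ Zf n,
            f i j k *
              (Complex.exp (2 * (Real.pi : ℂ) * Complex.I * ((c.1 : ℂ) * ((α * (i : ℝ) - (j : ℝ) : ℝ) : ℂ)) / ((2 * n - 1 : ℕ) : ℂ)) * Dk (2 * n - 1) (η - (c.1 : ℝ))) *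
              (Complex.exp (2 * (Real.pi : ℂ) * Complex.I * ((c.2 : ℂ) * ((β * (i : ℝ) - (k : ℝ) : ℝ) : ℂ)) / ((2 * n - 1 : ℕ) : ℂ)) * Dk (2 * n - 1) (ζ - (c.2 : ℝ))) := by
          symm
          rw [Finset.sum_comm]
          refine Finset.sum_congr rfl fun i _ => ?_
          rw [Finset.sum_comm]
          refine Finset.sum_congr rfl fun j _ => ?_
          rw [Finset.sum_comm]
          refine Finset.sum_congr rfl fun k _ => ?_
          rw [Zf2]
          exact sum_pair_mul (Zf (2 * n - 1)) (f i j k)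
            (fun l => Complex.exp (2 * (Real.pi : ℂ) * Complex.I * ((l : ℂ) * ((α * (i : ℝ) - (j : ℝ) : ℝ) : ℂ)) / ((2 * n - 1 : ℕ) : ℂ)) * Dk (2 * n - 1) (η - (l : ℝ)))
            (fun m => Complex.exp (2 * (Real.pi : ℂ) * Complex.I * ((m : ℂ) * ((β * (i : ℝ) - (k : ℝ) : ℝ) : ℂ)) / ((2 * n - 1 : ℕ) : ℂ)) * Dk (2 * n - 1) (ζ - (m : ℝ)))
      _ = ∑ c ∈ Zf2 (2 * n - 1),
            ft3 n f (-α * (c.1 : ℝ) - β * (c.2 : ℝ)) (c.1 : ℝ) (c.2 : ℝ) *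
              Dk (2 * n - 1) (η - (c.1 : ℝ)) * Dk (2 * n - 1) (ζ - (c.2 : ℝ)) := by
          refine Finset.sum_congr rfl fun c _ => ?_
          rw [ft3]
          simp only [Finset.sum_mul]
          refine Finset.sum_congr rfl fun i _ => Finset.sum_congr rfl fun j _ =>
            Finset.sum_congr rfl fun k _ => ?_
          rw [show (-(2 * (Real.pi : ℂ) * Complex.I) * (((-α * (c.1 : ℝ) - β * (c.2 : ℝ) : ℝ) : ℂ) * (i : ℂ) + ((c.1 : ℝ) : ℂ) * (j : ℂ) + ((c.2 : ℝ) : ℂ) * (k : ℂ)) / ((2 * n - 1 : ℕ) : ℂ)) = (2 * (Real.pi : ℂ) * Complex.I * ((c.1 : ℂ) * ((α * (i : ℝ) - (j : ℝ) : ℝ) : ℂ)) / ((2 * n - 1 : ℕ) : ℂ) + 2 * (Real.pi : ℂ) * Complex.I * ((c.2 : ℂ) * ((β * (i : ℝ) - (k : ℝ) : ℝ) : ℂ)) / ((2 * n - 1 : ℕ) : ℂ)) from by push_cast; ring, Complex.exp_add]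
          ring
  · intro ξ η
    calc ft2 n (proj n f (Dir.dz α β)) ξ η
        = ∑ c ∈ Zf2 (2 * n - 1), ∑ k ∈ Zf n, ∑ i ∈ Zf n, ∑ j ∈ Zf n,
            f i j k *
              (Dk (2 * n - 1) ((α * (k : ℝ) - (i : ℝ)) + (c.1 : ℝ)) * Complex.exp (-(2 * (Real.pi : ℂ) * Complex.I) * ((ξ : ℂ) * (c.1 : ℂ)) / ((2 * n - 1 : ℕ) : ℂ))) *
              (Dk (2 * n - 1) ((β * (k : ℝ) - (j : ℝ)) + (c.2 : ℝ)) * Complex.exp (-(2 * (Real.pi : ℂ) * Complex.I) * ((η : ℂ) * (c.2 : ℂ)) / ((2 * n - 1 : ℕ) : ℂ))) := by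
          rw [ft2]
          refine Finset.sum_congr rfl fun c hc => ?_
          simp only [proj]
          rw [if_pos hc, Finset.sum_mul]
          refine Finset.sum_congr rfl fun k hk => ?_
          rw [interp_lst hn1 f hk, Finset.sum_mul]
          refine Finset.sum_congr rfl fun i hi => ?_
          rw [Finset.sum_mul]
          refine Finset.sum_congr rfl fun j hj => ?_
          rw [show (α * (k : ℝ) + (c.1 : ℝ) - (i : ℝ)) = (α * (k : ℝ) - (i : ℝ)) + (c.1 : ℝ) from by ring,
              show (β * (k : ℝ) + (c.2 : ℝ) - (j : ℝ)) = (β * (k : ℝ) - (j : ℝ)) + (c.2 : ℝ) from by ring,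
              show Complex.exp (-(2 * (Real.pi : ℂ) * Complex.I) *
                  ((ξ : ℂ) * (c.1 : ℂ) + (η : ℂ) * (c.2 : ℂ)) / ((2 * n - 1 : ℕ) : ℂ))
                = Complex.exp (-(2 * (Real.pi : ℂ) * Complex.I) * ((ξ : ℂ) * (c.1 : ℂ)) / ((2 * n - 1 : ℕ) : ℂ)) * Complex.exp (-(2 * (Real.pi : ℂ) * Complex.I) * ((η : ℂ) * (c.2 : ℂ)) / ((2 * n - 1 : ℕ) : ℂ)) from by
                rw [← Complex.exp_add]; congr 1; ring]
          ring
      _ = ∑ k ∈ Zf n, ∑ i ∈ Zf n, ∑ j ∈ Zf n,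
            f i j k *
              (∑ l ∈ Zf (2 * n - 1), Dk (2 * n - 1) ((α * (k : ℝ) - (i : ℝ)) + (l : ℝ)) * Complex.exp (-(2 * (Real.pi : ℂ) * Complex.I) * ((ξ : ℂ) * (l : ℂ)) / ((2 * n - 1 : ℕ) : ℂ))) *
              (∑ m ∈ Zf (2 * n - 1), Dk (2 * n - 1) ((β * (k : ℝ) - (j : ℝ)) + (m : ℝ)) * Complex.exp (-(2 * (Real.pi : ℂ) * Complex.I) * ((η : ℂ) * (m : ℂ)) / ((2 * n - 1 : ℕ) : ℂ))) := by
          rw [Finset.sum_comm]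
          refine Finset.sum_congr rfl fun k _ => ?_
          rw [Finset.sum_comm]
          refine Finset.sum_congr rfl fun i _ => ?_
          rw [Finset.sum_comm]
          refine Finset.sum_congr rfl fun j _ => ?_
          rw [Zf2]
          exact sum_pair_mul (Zf (2 * n - 1)) (f i j k)
            (fun l => Dk (2 * n - 1) ((α * (k : ℝ) - (i : ℝ)) + (l : ℝ)) * Complex.exp (-(2 * (Real.pi : ℂ) * Complex.I) * ((ξ : ℂ) * (l : ℂ)) / ((2 * n - 1 : ℕ) : ℂ)))
            (fun m => Dk (2 * n - 1) ((β * (k : ℝ) - (j : ℝ)) + (m : ℝ)) * Complex.exp (-(2 * (Real.pi : ℂ) * Complex.I) * ((η : ℂ) * (m : ℂ)) / ((2 * n - 1 : ℕ) : ℂ)))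
      _ = ∑ k ∈ Zf n, ∑ i ∈ Zf n, ∑ j ∈ Zf n,
            f i j k *
              (∑ l ∈ Zf (2 * n - 1), Complex.exp (2 * (Real.pi : ℂ) * Complex.I * ((l : ℂ) * ((α * (k : ℝ) - (i : ℝ) : ℝ) : ℂ)) / ((2 * n - 1 : ℕ) : ℂ)) * Dk (2 * n - 1) (ξ - (l : ℝ))) *
              (∑ m ∈ Zf (2 * n - 1), Complex.exp (2 * (Real.pi : ℂ) * Complex.I * ((m : ℂ) * ((β * (k : ℝ) - (j : ℝ) : ℝ) : ℂ)) / ((2 * n - 1 : ℕ) : ℂ)) * Dk (2 * n - 1) (η - (m : ℝ))) := by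
          refine Finset.sum_congr rfl fun k _ => Finset.sum_congr rfl fun i _ =>
            Finset.sum_congr rfl fun j _ => ?_
          rw [core_slice hodd (α * (k : ℝ) - (i : ℝ)) ξ, core_slice hodd (β * (k : ℝ) - (j : ℝ)) η]
      _ = ∑ c ∈ Zf2 (2 * n - 1), ∑ k ∈ Zf n, ∑ i ∈ Zf n, ∑ j ∈ Zf n,
            f i j k *
              (Complex.exp (2 * (Real.pi : ℂ) * Complex.I * ((c.1 : ℂ) * ((α * (k : ℝ) - (i : ℝ) : ℝ) : ℂ)) / ((2 * n - 1 : ℕ) : ℂ)) * Dk (2 * n - 1) (ξ - (c.1 : ℝ))) *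
              (Complex.exp (2 * (Real.pi : ℂ) * Complex.I * ((c.2 : ℂ) * ((β * (k : ℝ) - (j : ℝ) : ℝ) : ℂ)) / ((2 * n - 1 : ℕ) : ℂ)) * Dk (2 * n - 1) (η - (c.2 : ℝ))) := by
          symm
          rw [Finset.sum_comm]
          refine Finset.sum_congr rfl fun k _ => ?_
          rw [Finset.sum_comm]
          refine Finset.sum_congr rfl fun i _ => ?_
          rw [Finset.sum_comm]
          refine Finset.sum_congr rfl fun j _ => ?_
          rw [Zf2]
          exact sum_pair_mul (Zf (2 * n - 1)) (f i j k)
            (fun l => Complex.exp (2 * (Real.pi : ℂ) * Complex.I * ((l : ℂ) * ((α * (k : ℝ) - (i : ℝ) : ℝ) : ℂ)) / ((2 * n - 1 : ℕ) : ℂ)) * Dk (2 * n - 1) (ξ - (l : ℝ)))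
            (fun m => Complex.exp (2 * (Real.pi : ℂ) * Complex.I * ((m : ℂ) * ((β * (k : ℝ) - (j : ℝ) : ℝ) : ℂ)) / ((2 * n - 1 : ℕ) : ℂ)) * Dk (2 * n - 1) (η - (m : ℝ)))
      _ = ∑ c ∈ Zf2 (2 * n - 1),
            ft3 n f (c.1 : ℝ) (c.2 : ℝ) (-α * (c.1 : ℝ) - β * (c.2 : ℝ)) *
              Dk (2 * n - 1) (ξ - (c.1 : ℝ)) * Dk (2 * n - 1) (η - (c.2 : ℝ)) := by
          refine Finset.sum_congr rfl fun c _ => ?_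
          rw [ft3]
          simp only [Finset.sum_mul]
          rw [Finset.sum_comm]
          refine Finset.sum_congr rfl fun i _ => ?_
          rw [Finset.sum_comm]
          refine Finset.sum_congr rfl fun j _ => Finset.sum_congr rfl fun k _ => ?_
          rw [show (-(2 * (Real.pi : ℂ) * Complex.I) * (((c.1 : ℝ) : ℂ) * (i : ℂ) + ((c.2 : ℝ) : ℂ) * (j : ℂ) + ((-α * (c.1 : ℝ) - β * (c.2 : ℝ) : ℝ) : ℂ) * (k : ℂ)) / ((2 * n - 1 : ℕ) : ℂ)) = (2 * (Real.pi : ℂ) * Complex.I * ((c.1 : ℂ) * ((α * (k : ℝ) - (i : ℝ) : ℝ) : ℂ)) / ((2 * n - 1 : ℕ) : ℂ) + 2 * (Real.pi : ℂ) * Complex.I * ((c.2 : ℂ) * ((β * (k : ℝ) - (j : ℝ) : ℝ) : ℂ)) / ((2 * n - 1 : ℕ) : ℂ)) from by push_cast; ring, Complex.exp_add]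
          ring

end Tomo3D
end
end

section
/- Uniqueness for discrete projection tomography: Let f, g ∈ O_n and let T be any one of the three families of directions {(1,α_l,β_l) : l = 1,…,n}, {(α_l,1,β_l) : l = 1,…,n}, {(α_l,β_l,1) : l = 1,…,n}, where the family (α_l,β_l) satisfies the diversity condition. If there is a constant θ0 ∈ ℝ such that g_t(m) = exp(i·θ0)·f_t(m) for every t ∈ T and every m ∈ Z_p², then g = exp(i·θ0)·f. -/
open Complex MeasureTheory ProbabilityTheory BigOperators

noncomputable section

namespace Tomo3D

/-- basic exponential -/
def ep (p : ℕ) (x : ℂ) : ℂ := Complex.exp (2 * (Real.pi : ℂ) * Complex.I * x / p)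

lemma ep_add (p : ℕ) (x y : ℂ) : ep p (x + y) = ep p x * ep p y := by
  rw [ep, ep, ep, ← Complex.exp_add]; ring_nf

lemma ep_zero (p : ℕ) : ep p 0 = 1 := by simp [ep]

lemma ep_ne_zero (p : ℕ) (x : ℂ) : ep p x ≠ 0 := Complex.exp_ne_zero _

lemma ep_intmul (p : ℕ) (m : ℤ) (x : ℂ) : ep p (m * x) = ep p x ^ m := by
  rw [ep, ep, ← Complex.exp_int_mul]; congr 1; ring

lemma ep_int_p (p : ℕ) (hp : p ≠ 0) (m : ℤ) : ep p ((m : ℂ) * p) = 1 := by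
  have : (2 * (Real.pi : ℂ) * Complex.I * ((m:ℂ) * p) / p) = m * (2 * Real.pi * Complex.I) := by
    have hp' : (p : ℂ) ≠ 0 := Nat.cast_ne_zero.2 hp
    field_simp
  rw [ep, this, Complex.exp_int_mul_two_pi_mul_I]

lemma ep_int_eq_one_iff (p : ℕ) (hp : p ≠ 0) (m : ℤ) :
    ep p (m : ℂ) = 1 ↔ (p : ℤ) ∣ m := by
  constructor
  · intro h
    rw [ep, Complex.exp_eq_one_iff] at h
    obtain ⟨k, hk⟩ := h
    have hp' : (p : ℂ) ≠ 0 := Nat.cast_ne_zero.2 hp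
    have hp' : (p : ℂ) ≠ 0 := Nat.cast_ne_zero.2 hp
    have hpi : (Real.pi : ℂ) ≠ 0 := by exact_mod_cast Real.pi_ne_zero
    have hC : (m : ℂ) = (k : ℂ) * p := by
      field_simp at hk
      have h2 : (2 : ℂ) * Real.pi * Complex.I ≠ 0 := by
        simp [hpi, Complex.I_ne_zero]
      exact mul_left_cancel₀ h2 (by linear_combination (2 * (Real.pi:ℂ) * Complex.I) * hk)
    have : m = k * p := by exact_mod_cast hC
    exact ⟨k, by rw [this]; ring⟩
  · rintro ⟨k, rfl⟩
    push_cast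
    rw [show ((p:ℂ) * k) = (k:ℂ) * p by ring]
    exact ep_int_p p hp k



lemma ep_real_eq_one_iff (p : ℕ) (hp : p ≠ 0) (r : ℝ) :
    ep p ((r : ℝ) : ℂ) = 1 ↔ ∃ m : ℤ, r = (m : ℝ) * p := by
  constructor
  · intro h
    rw [ep, Complex.exp_eq_one_iff] at h
    obtain ⟨k, hk⟩ := h
    have hp' : (p : ℂ) ≠ 0 := Nat.cast_ne_zero.2 hp
    have hpi : (Real.pi : ℂ) ≠ 0 := by exact_mod_cast Real.pi_ne_zero
    have h2 : (2 : ℂ) * Real.pi * Complex.I ≠ 0 := by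
      simp [hpi, Complex.I_ne_zero]
    field_simp at hk
    have hC : ((r:ℝ):ℂ) = (k : ℂ) * p := mul_left_cancel₀ h2 (by linear_combination (2 * (Real.pi:ℂ) * Complex.I) * hk)
    refine ⟨k, ?_⟩
    have : ((r:ℝ):ℂ) = (((k:ℝ) * p : ℝ) : ℂ) := by rw [hC]; push_cast; ring
    exact_mod_cast this
  · rintro ⟨m, rfl⟩
    rw [show ((((m:ℝ) * p : ℝ)) : ℂ) = (m:ℂ) * p by push_cast; ring]
    exact ep_int_p p hp m

lemma Zf_odd (P : ℕ) : Zf (2*P+1) = Finset.Icc (-(P:ℤ)) P := by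
  unfold Zf
  congr 1 <;> push_cast <;> omega

lemma sum_zpow_Icc (z : ℂ) (hz : z ≠ 0) (P : ℕ) :
    ∑ l ∈ Finset.Icc (-(P:ℤ)) P, z ^ l
      = z ^ (-(P:ℤ)) * ∑ j ∈ Finset.range (2*P+1), z ^ j := by
  rw [Finset.mul_sum]
  refine Finset.sum_nbij' (fun l : ℤ => (l + P).toNat) (fun j : ℕ => (j:ℤ) - P) ?_ ?_ ?_ ?_ ?_
  · intro l hl; simp only [Finset.mem_Icc] at hl; simp only [Finset.mem_range]; omega
  · intro j hj; simp only [Finset.mem_range] at hj; simp only [Finset.mem_Icc]; omega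
  · intro l hl; simp only [Finset.mem_Icc] at hl; omega
  · intro j hj; simp only [Finset.mem_range] at hj; omega
  · intro l hl
    simp only [Finset.mem_Icc] at hl
    rw [← zpow_natCast z, ← zpow_add₀ hz]
    congr 1
    omega

lemma orth (P : ℕ) (m : ℤ) :
    ∑ l ∈ Finset.Icc (-(P:ℤ)) P, ep (2*P+1) ((l:ℂ) * m)
      = if ((2*P+1 : ℤ)) ∣ m then ((2*P+1 : ℕ) : ℂ) else 0 := by
  have hp : (2*P+1 : ℕ) ≠ 0 := by omega
  set ζ := ep (2*P+1) (m : ℂ) with hζ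
  have hterm : ∀ l : ℤ, ep (2*P+1) ((l:ℂ) * m) = ζ ^ l := fun l => ep_intmul _ l _
  simp only [hterm]
  by_cases hd : ((2*P+1 : ℤ)) ∣ m
  · have h1 : ζ = 1 := by
      rw [hζ]
      rw [ep_int_eq_one_iff _ hp]
      exact_mod_cast hd
    have hcard : (Finset.Icc (-(P:ℤ)) P).card = 2*P+1 := by
      rw [Int.card_Icc]; omega
    simp only [h1, one_zpow, Finset.sum_const, nsmul_eq_mul, mul_one, hcard, if_pos hd]
  · have h1 : ζ ≠ 1 := by
      rw [hζ, Ne, ep_int_eq_one_iff _ hp]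
      intro h; exact hd (by exact_mod_cast h)
    have hz : ζ ≠ 0 := ep_ne_zero _ _
    rw [sum_zpow_Icc ζ hz P, geom_sum_eq h1]
    have hzp : ζ ^ (2*P+1) = 1 := by
      rw [← zpow_natCast ζ, ← ep_intmul]
      rw [show ((((2*P+1:ℕ) : ℤ) : ℂ) * m) = (((((2*P+1:ℕ) : ℤ) * m : ℤ)) : ℂ) by push_cast; ring]
      rw [ep_int_eq_one_iff _ hp]
      exact Dvd.intro m rfl
    rw [hzp, if_neg hd]
    simp


lemma Dk_eq (P : ℕ) (t : ℝ) :
    Dk (2*P+1) t = ((2*P+1:ℕ) : ℂ)⁻¹ * ∑ l ∈ Finset.Icc (-(P:ℤ)) P, ep (2*P+1) ((l:ℂ) * t) := by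
  rw [Dk, Zf_odd]
  congr 1
  apply Finset.sum_congr rfl
  intro l _
  rw [ep]
  congr 1
  ring

lemma Dk_int_s14 (P : ℕ) (m : ℤ) (hm : |m| ≤ 2*(P:ℤ)) :
    Dk (2*P+1) ((m:ℤ) : ℝ) = if m = 0 then 1 else 0 := by
  have hq : ((2*P+1:ℕ) : ℂ) ≠ 0 := Nat.cast_ne_zero.2 (by omega)
  have hq2 : (2*(P:ℂ)+1) ≠ 0 := by exact_mod_cast hq
  have key : ∀ m' : ℤ, (2*(P:ℤ)+1) ∣ m' → |m'| ≤ 2*(P:ℤ) → m' = 0 := by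
    intro m' hd hb
    rw [abs_le] at hb
    exact Int.eq_zero_of_dvd_of_natAbs_lt_natAbs hd (by omega)
  rw [Dk_eq]
  have : ∀ l : ℤ, ep (2*P+1) ((l:ℂ) * ((m:ℝ):ℂ)) = ep (2*P+1) ((l:ℂ) * (m:ℂ)) := by
    intro l; norm_cast
  simp only [this]
  rw [orth]
  by_cases h : m = 0
  · rw [if_pos h, if_pos (by simp [h])]
    push_cast
    rw [inv_mul_cancel₀ hq2]
  · rw [if_neg h, if_neg, mul_zero]
    intro hd
    exact h (key m hd hm)

lemma dirichlet_shift (P : ℕ) (t : ℝ) (u : ℤ) (hu : u ∈ Finset.Icc (-(P:ℤ)) P) :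
    ∑ c ∈ Finset.Icc (-(P:ℤ)) P, Dk (2*P+1) (t + (c:ℝ)) * ep (2*P+1) (-((u:ℂ) * (c:ℂ)))
      = ep (2*P+1) ((u:ℂ) * (t:ℂ)) := by
  have hq : ((2*P+1:ℕ) : ℂ) ≠ 0 := Nat.cast_ne_zero.2 (by omega)
  have hq2 : (2*(P:ℂ)+1) ≠ 0 := by exact_mod_cast hq
  have expand : ∀ c ∈ Finset.Icc (-(P:ℤ)) P,
      Dk (2*P+1) (t + (c:ℝ)) * ep (2*P+1) (-((u:ℂ) * (c:ℂ)))
        = ∑ l ∈ Finset.Icc (-(P:ℤ)) P,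
            ((2*P+1:ℕ) : ℂ)⁻¹ * ep (2*P+1) ((l:ℂ) * t) * ep (2*P+1) ((c:ℂ) * (((l - u : ℤ)):ℂ)) := by
    intro c _
    rw [Dk_eq, Finset.mul_sum, Finset.sum_mul]
    apply Finset.sum_congr rfl
    intro l _
    rw [mul_assoc, mul_assoc, ← ep_add, ← ep_add]
    congr 2
    push_cast
    ring
  rw [Finset.sum_congr rfl expand, Finset.sum_comm]
  have inner : ∀ l ∈ Finset.Icc (-(P:ℤ)) P,
      ∑ c ∈ Finset.Icc (-(P:ℤ)) P,
          ((2*P+1:ℕ) : ℂ)⁻¹ * ep (2*P+1) ((l:ℂ) * t) * ep (2*P+1) ((c:ℂ) * (((l - u : ℤ)):ℂ))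
        = if l = u then ep (2*P+1) ((u:ℂ) * t) else 0 := by
    intro l hl
    rw [← Finset.mul_sum, orth]
    simp only [Finset.mem_Icc] at hl hu
    by_cases h : l = u
    · subst h
      rw [if_pos (by simp), if_pos rfl]
      push_cast
      rw [mul_comm ((2*(P:ℂ)+1))⁻¹, mul_assoc, inv_mul_cancel₀ hq2, mul_one]
    · rw [if_neg, if_neg h, mul_zero]
      intro hd
      exact h (by have := Int.eq_zero_of_dvd_of_natAbs_lt_natAbs hd (by omega); omega)
  rw [Finset.sum_congr rfl inner, Finset.sum_ite_eq' _ u, if_pos hu]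

lemma vandermonde (ν : ℕ) (b : ℤ → ℂ) (s : Finset ℂ) (hcard : 2*ν+1 ≤ s.card)
    (h0 : ∀ z ∈ s, z ≠ 0)
    (hsum : ∀ z ∈ s, ∑ i ∈ Finset.Icc (-(ν:ℤ)) ν, b i * z ^ i = 0) :
    ∀ i ∈ Finset.Icc (-(ν:ℤ)) ν, b i = 0 := by
  set Q : Polynomial ℂ := ∑ j ∈ Finset.range (2*ν+1), Polynomial.C (b ((j:ℤ) - ν)) * Polynomial.X ^ j
    with hQ
  have hdeg : Q.natDegree < 2*ν+1 := by
    have : Q.natDegree ≤ 2*ν := by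
      apply Polynomial.natDegree_sum_le_of_forall_le
      intro j hj
      simp only [Finset.mem_range] at hj
      refine le_trans (Polynomial.natDegree_C_mul_le _ _) ?_
      simp [Polynomial.natDegree_X_pow]
      omega
    omega
  have heval : ∀ z ∈ s, Q.eval z = 0 := by
    intro z hz
    have hzne := h0 z hz
    have : Q.eval z = (∑ i ∈ Finset.Icc (-(ν:ℤ)) ν, b i * z ^ i) * z ^ (ν:ℕ) := by
      rw [hQ, Polynomial.eval_finset_sum, Finset.sum_mul]
      refine Finset.sum_nbij' (fun j : ℕ => (j:ℤ) - ν) (fun i : ℤ => (i + ν).toNat) ?_ ?_ ?_ ?_ ?_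
      · intro j hj; simp only [Finset.mem_range] at hj; simp only [Finset.mem_Icc]; omega
      · intro i hi; simp only [Finset.mem_Icc] at hi; simp only [Finset.mem_range]; omega
      · intro j hj; simp only [Finset.mem_range] at hj; omega
      · intro i hi; simp only [Finset.mem_Icc] at hi; omega
      · intro j hj
        simp only [Finset.mem_range] at hj
        rw [Polynomial.eval_mul, Polynomial.eval_C, Polynomial.eval_pow, Polynomial.eval_X]
        rw [mul_assoc, ← zpow_natCast z, ← zpow_natCast z ν, ← zpow_add₀ hzne]
        congr 2
        omega
    rw [this, hsum z hz, zero_mul]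
  have hQ0 : Q = 0 :=
    Polynomial.eq_zero_of_natDegree_lt_card_of_eval_eq_zero' Q s heval (lt_of_lt_of_le hdeg hcard)
  intro i hi
  simp only [Finset.mem_Icc] at hi
  have hcoeff : Q.coeff ((i + ν).toNat) = b i := by
    rw [hQ, Polynomial.finset_sum_coeff]
    have : ∀ j ∈ Finset.range (2*ν+1),
        (Polynomial.C (b ((j:ℤ) - ν)) * Polynomial.X ^ j).coeff ((i + ν).toNat)
          = if j = (i + ν).toNat then b ((j:ℤ) - ν) else 0 := by
      intro j _
      rw [Polynomial.coeff_C_mul, Polynomial.coeff_X_pow]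
      by_cases h : j = (i + ν).toNat <;> simp [h]
      omega
    rw [Finset.sum_congr rfl this, Finset.sum_ite_eq' _ ((i + ν).toNat), if_pos (by
      simp only [Finset.mem_range]; omega)]
    congr 1
    omega
  rw [← hcoeff, hQ0]
  simp

/-- Collapse of the first Dirichlet factor at integer points. -/
lemma interp_int (n ν : ℕ) (hn : n = 2*ν+1) (f : ℤ → ℤ → ℤ → ℂ) (i : ℤ) (hi : i ∈ Zf n)
    (y z : ℝ) :
    interp n f (i : ℝ) y z
      = ∑ j ∈ Zf n, ∑ k ∈ Zf n, f i j k * Dk (2*n-1) (y - (j:ℝ)) * Dk (2*n-1) (z - (k:ℝ)) := by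
  have hp : 2*n-1 = 2*(2*ν)+1 := by omega
  have hZn : Zf n = Finset.Icc (-(ν:ℤ)) ν := by rw [hn]; exact Zf_odd ν
  rw [interp]
  have key : ∀ i' ∈ Zf n,
      (∑ j ∈ Zf n, ∑ k ∈ Zf n,
        f i' j k * Dk (2*n-1) ((i:ℝ) - (i':ℝ)) * Dk (2*n-1) (y - (j:ℝ)) * Dk (2*n-1) (z - (k:ℝ)))
      = if i' = i then
          (∑ j ∈ Zf n, ∑ k ∈ Zf n, f i j k * Dk (2*n-1) (y - (j:ℝ)) * Dk (2*n-1) (z - (k:ℝ)))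
        else 0 := by
    intro i' hi'
    have habs : |i - i'| ≤ 2*((2*ν:ℕ):ℤ) := by
      rw [hZn] at hi hi'
      simp only [Finset.mem_Icc] at hi hi'
      rw [abs_le]
      push_cast
      omega
    have hδ : Dk (2*n-1) ((i:ℝ) - (i':ℝ)) = if i - i' = 0 then 1 else 0 := by
      rw [hp, show ((i:ℝ) - (i':ℝ)) = (((i - i' : ℤ)):ℝ) by push_cast; ring]
      exact Dk_int_s14 (2*ν) (i - i') habs
    by_cases h : i' = i
    · subst h
      rw [if_pos rfl]
      apply Finset.sum_congr rfl; intro j _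
      apply Finset.sum_congr rfl; intro k _
      rw [hδ, if_pos (by omega), mul_one]
    · rw [if_neg h, hδ, if_neg (by omega)]
      simp only [mul_zero, zero_mul, Finset.sum_const_zero]
  rw [Finset.sum_congr rfl key, Finset.sum_ite_eq' _ i, if_pos hi]

/-- product factorization helper -/
lemma sum_prod_fact (s t : Finset ℤ) (a : ℂ) (F G : ℤ → ℂ) :
    ∑ c ∈ s ×ˢ t, a * F c.1 * G c.2 = a * (∑ c1 ∈ s, F c1) * (∑ c2 ∈ t, G c2) := by
  rw [Finset.sum_product, mul_assoc, Finset.sum_mul_sum, Finset.mul_sum]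
  apply Finset.sum_congr rfl
  intro c1 _
  rw [Finset.mul_sum]
  apply Finset.sum_congr rfl
  intro c2 _
  ring

/-- The discrete Fourier slice theorem for dx-directions. -/
lemma slice (n ν : ℕ) (hn : n = 2*ν+1) (f : ℤ → ℤ → ℤ → ℂ) (α β : ℝ) (u v : ℤ)
    (hu : u ∈ Zf (2*n-1)) (hv : v ∈ Zf (2*n-1)) :
    ∑ c ∈ Zf2 (2*n-1), proj n f (Dir.dx α β) c * ep (2*n-1) (-((u:ℂ) * (c.1:ℂ) + (v:ℂ) * (c.2:ℂ)))
      = ∑ i ∈ Zf n,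
          (∑ j ∈ Zf n, ∑ k ∈ Zf n, f i j k * ep (2*n-1) (-((u:ℂ)*(j:ℂ) + (v:ℂ)*(k:ℂ))))
            * ep (2*n-1) ((i:ℂ) * ((α*(u:ℝ) + β*(v:ℝ) : ℝ):ℂ)) := by
  have hp : 2*n-1 = 2*(2*ν)+1 := by omega
  have hZp : Zf (2*n-1) = Finset.Icc (-((2*ν:ℕ):ℤ)) ((2*ν:ℕ):ℤ) := by rw [hp]; exact Zf_odd (2*ν)
  -- Step 1: expand proj and multiply in the exponential, flattening to X
  have step1 : ∀ c ∈ Zf2 (2*n-1),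
      proj n f (Dir.dx α β) c * ep (2*n-1) (-((u:ℂ) * (c.1:ℂ) + (v:ℂ) * (c.2:ℂ)))
        = ∑ i ∈ Zf n, ∑ j ∈ Zf n, ∑ k ∈ Zf n,
            f i j k * (Dk (2*n-1) ((α*(i:ℝ) - (j:ℝ)) + (c.1:ℝ)) * ep (2*n-1) (-((u:ℂ) * (c.1:ℂ))))
              * (Dk (2*n-1) ((β*(i:ℝ) - (k:ℝ)) + (c.2:ℝ)) * ep (2*n-1) (-((v:ℂ) * (c.2:ℂ)))) := by
    intro c hc
    simp only [proj]
    rw [if_pos hc]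
    rw [Finset.sum_congr rfl (fun i hi =>
      interp_int n ν hn f i hi (α * (i:ℝ) + (c.1:ℝ)) (β * (i:ℝ) + (c.2:ℝ)))]
    rw [Finset.sum_mul]
    apply Finset.sum_congr rfl; intro i _
    rw [Finset.sum_mul]
    apply Finset.sum_congr rfl; intro j _
    rw [Finset.sum_mul]
    apply Finset.sum_congr rfl; intro k _
    rw [show -((u:ℂ) * (c.1:ℂ) + (v:ℂ) * (c.2:ℂ)) = -((u:ℂ) * (c.1:ℂ)) + -((v:ℂ) * (c.2:ℂ)) by ring,
      ep_add]
    rw [show α*(i:ℝ) + (c.1:ℝ) - (j:ℝ) = (α*(i:ℝ) - (j:ℝ)) + (c.1:ℝ) by ring,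
      show β*(i:ℝ) + (c.2:ℝ) - (k:ℝ) = (β*(i:ℝ) - (k:ℝ)) + (c.2:ℝ) by ring]
    ring
  rw [Finset.sum_congr rfl step1]
  -- Step 2: swap the c-sum inside
  rw [Finset.sum_comm]
  apply Finset.sum_congr rfl; intro i hi
  rw [Finset.sum_comm]
  rw [Finset.sum_mul]
  apply Finset.sum_congr rfl; intro j hj
  rw [Finset.sum_comm]
  rw [Finset.sum_mul]
  apply Finset.sum_congr rfl; intro k hk
  -- Step 3: factor the product sum and apply dirichlet_shift
  rw [Zf2]
  refine Eq.trans (sum_prod_fact (Zf (2*n-1)) (Zf (2*n-1)) (f i j k)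
      (fun c1 => Dk (2*n-1) (α*(i:ℝ) - (j:ℝ) + (c1:ℝ)) * ep (2*n-1) (-((u:ℂ) * (c1:ℂ))))
      (fun c2 => Dk (2*n-1) (β*(i:ℝ) - (k:ℝ) + (c2:ℝ)) * ep (2*n-1) (-((v:ℂ) * (c2:ℂ))))) ?_
  beta_reduce
  rw [hZp] at hu hv
  rw [hp, Zf_odd]
  rw [dirichlet_shift (2*ν) (α*(i:ℝ) - (j:ℝ)) u hu, dirichlet_shift (2*ν) (β*(i:ℝ) - (k:ℝ)) v hv]
  rw [← hp]
  -- Step 4: combine exponentials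
  rw [mul_assoc, ← ep_add, mul_assoc, ← ep_add]
  congr 1
  push_cast
  ring


def pft (n p : ℕ) (h : ℤ → ℤ → ℤ → ℂ) (i u v : ℤ) : ℂ :=
  ∑ j ∈ Zf n, ∑ k ∈ Zf n, h i j k * ep p (-((u:ℂ)*(j:ℂ) + (v:ℂ)*(k:ℂ)))

/-- Core uniqueness: vanishing dx-projections imply the object vanishes. -/
lemma core (n ν : ℕ) (hn : n = 2*ν+1) (hn3 : 3 ≤ n)
    (h : ℤ → ℤ → ℤ → ℂ) (hobj : IsObj n h)
    (α β : Fin n → ℝ) (hdiv : Diversity n α β)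
    (hproj : ∀ l : Fin n, ∀ c ∈ Zf2 (2*n-1), proj n h (Dir.dx (α l) (β l)) c = 0) :
    ∀ i j k : ℤ, h i j k = 0 := by
  have hp : 2*n-1 = 2*(2*ν)+1 := by omega
  have hpne : (2*n-1 : ℕ) ≠ 0 := by omega
  have hZn : Zf n = Finset.Icc (-(ν:ℤ)) ν := by rw [hn]; exact Zf_odd ν
  have hZp : Zf (2*n-1) = Finset.Icc (-((2*ν:ℕ):ℤ)) ((2*ν:ℕ):ℤ) := by
    rw [hp]; exact Zf_odd (2*ν)
  -- Step A: the partial transform vanishes at nonzero frequencies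
  have stepA : ∀ u v : ℤ, u ∈ Zf (2*n-1) → v ∈ Zf (2*n-1) → (u,v) ≠ ((0:ℤ),(0:ℤ)) →
      ∀ i ∈ Zf n, pft n (2*n-1) h i u v = 0 := by
    intro u v hu hv huv
    have key : ∀ l : Fin n,
        ∑ i ∈ Finset.Icc (-(ν:ℤ)) ν, pft n (2*n-1) h i u v
            * ep (2*n-1) (((α l * (u:ℝ) + β l * (v:ℝ) : ℝ)):ℂ) ^ i = 0 := by
      intro l
      have hslice := slice n ν hn h (α l) (β l) u v hu hv
      rw [Finset.sum_congr rfl (fun c hc => by rw [hproj l c hc, zero_mul]),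
        Finset.sum_const_zero] at hslice
      rw [← hZn]
      rw [Finset.sum_congr rfl (fun i _ => by
        rw [← ep_intmul (2*n-1) i (((α l * (u:ℝ) + β l * (v:ℝ) : ℝ)):ℂ)]
        rfl :
        ∀ i ∈ Zf n, pft n (2*n-1) h i u v
            * ep (2*n-1) (((α l * (u:ℝ) + β l * (v:ℝ) : ℝ)):ℂ) ^ i
          = (∑ j ∈ Zf n, ∑ k ∈ Zf n, h i j k * ep (2*n-1) (-((u:ℂ)*(j:ℂ) + (v:ℂ)*(k:ℂ))))
            * ep (2*n-1) ((i:ℂ) * ((α l *(u:ℝ) + β l *(v:ℝ) : ℝ):ℂ)))]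
      exact hslice.symm
    have hzinj : ∀ l l' : Fin n, ep (2*n-1) (((α l * (u:ℝ) + β l * (v:ℝ) : ℝ)):ℂ)
        = ep (2*n-1) (((α l' * (u:ℝ) + β l' * (v:ℝ) : ℝ)):ℂ) → l = l' := by
      intro l l' hll
      by_contra hne
      apply hdiv.2 (u,v) (by simp only [Zf2, Finset.mem_product]; exact ⟨hu, hv⟩) huv l l' hne
      have hsplit : ep (2*n-1)
          (((α l * (u:ℝ) + β l * (v:ℝ)) - (α l' * (u:ℝ) + β l' * (v:ℝ)) : ℝ) : ℂ) = 1 := by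
        apply mul_left_cancel₀ (ep_ne_zero (2*n-1) (((α l' * (u:ℝ) + β l' * (v:ℝ) : ℝ)):ℂ))
        rw [mul_one, ← ep_add]
        rw [show (((α l' * (u:ℝ) + β l' * (v:ℝ) : ℝ)):ℂ)
            + (((α l * (u:ℝ) + β l * (v:ℝ)) - (α l' * (u:ℝ) + β l' * (v:ℝ)) : ℝ) : ℂ)
            = (((α l * (u:ℝ) + β l * (v:ℝ) : ℝ)):ℂ) by push_cast; ring]
        exact hll
      rw [ep_real_eq_one_iff _ hpne] at hsplit
      obtain ⟨m, hm⟩ := hsplit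
      exact ⟨m, hm⟩
    set z : Fin n → ℂ := fun l => ep (2*n-1) (((α l * (u:ℝ) + β l * (v:ℝ) : ℝ)):ℂ) with hz
    have hcard : 2*ν+1 ≤ (Finset.image z Finset.univ).card := by
      rw [Finset.card_image_of_injective _ (fun l l' => hzinj l l'), Finset.card_univ,
        Fintype.card_fin]
      omega
    have h0 : ∀ w ∈ Finset.image z Finset.univ, w ≠ 0 := by
      intro w hw
      obtain ⟨l, _, rfl⟩ := Finset.mem_image.1 hw
      exact ep_ne_zero _ _
    have hsum : ∀ w ∈ Finset.image z Finset.univ,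
        ∑ i ∈ Finset.Icc (-(ν:ℤ)) ν, (fun i => pft n (2*n-1) h i u v) i * w ^ i = 0 := by
      intro w hw
      obtain ⟨l, _, rfl⟩ := Finset.mem_image.1 hw
      exact key l
    intro i hi
    exact vandermonde ν (fun i => pft n (2*n-1) h i u v) (Finset.image z Finset.univ)
      hcard h0 hsum i (by rwa [← hZn])
  -- Step B and C
  have h00mem : ((0:ℤ),(0:ℤ)) ∈ Zf2 (2*n-1) := by
    simp only [Zf2, Finset.mem_product]
    constructor <;> (rw [hZp]; simp only [Finset.mem_Icc]; omega)
  have dvd_small : ∀ a a' : ℤ, a ∈ Zf n → a' ∈ Zf n →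
      ((2*(2*ν:ℕ)+1 : ℤ) ∣ (a - a') ↔ a' = a) := by
    intro a a' ha ha'
    rw [hZn] at ha ha'
    simp only [Finset.mem_Icc] at ha ha'
    constructor
    · intro hd
      have := Int.eq_zero_of_dvd_of_natAbs_lt_natAbs hd (by push_cast; omega)
      omega
    · rintro rfl; simp
  have stepB : ∀ i ∈ Zf n, ∀ j ∈ Zf n, ∀ k ∈ Zf n,
      ((2*n-1:ℕ):ℂ) * ((2*n-1:ℕ):ℂ) * h i j k = pft n (2*n-1) h i 0 0 := by
    intro i hi j hj k hk
    have hLHS : ∑ w ∈ Zf2 (2*n-1),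
        pft n (2*n-1) h i w.1 w.2 * ep (2*n-1) ((w.1:ℂ)*(j:ℂ) + (w.2:ℂ)*(k:ℂ))
          = pft n (2*n-1) h i 0 0 := by
      rw [Finset.sum_eq_single_of_mem ((0:ℤ),(0:ℤ)) h00mem]
      · rw [show (((0:ℤ):ℂ)*(j:ℂ) + ((0:ℤ):ℂ)*(k:ℂ)) = 0 by push_cast; ring, ep_zero, mul_one]
      · intro w hw hwne
        simp only [Zf2, Finset.mem_product] at hw
        rw [stepA w.1 w.2 hw.1 hw.2 (by rwa [Prod.mk.eta]) i hi, zero_mul]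
    have step1 : ∀ w ∈ Zf2 (2*n-1),
        pft n (2*n-1) h i w.1 w.2 * ep (2*n-1) ((w.1:ℂ)*(j:ℂ) + (w.2:ℂ)*(k:ℂ))
          = ∑ j' ∈ Zf n, ∑ k' ∈ Zf n, h i j' k'
              * ep (2*n-1) ((w.1:ℂ) * (((j - j' : ℤ)):ℂ))
              * ep (2*n-1) ((w.2:ℂ) * (((k - k' : ℤ)):ℂ)) := by
      intro w _
      simp only [pft]
      rw [Finset.sum_mul]
      apply Finset.sum_congr rfl; intro j' _
      rw [Finset.sum_mul]
      apply Finset.sum_congr rfl; intro k' _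
      rw [mul_assoc, ← ep_add, mul_assoc, ← ep_add]
      congr 2
      push_cast
      ring
    have hRHS : ∑ w ∈ Zf2 (2*n-1),
        pft n (2*n-1) h i w.1 w.2 * ep (2*n-1) ((w.1:ℂ)*(j:ℂ) + (w.2:ℂ)*(k:ℂ))
          = ((2*n-1:ℕ):ℂ) * ((2*n-1:ℕ):ℂ) * h i j k := by
      rw [Finset.sum_congr rfl step1, Finset.sum_comm]
      have inner : ∀ j' ∈ Zf n,
          ∑ w ∈ Zf2 (2*n-1), ∑ k' ∈ Zf n, h i j' k'
              * ep (2*n-1) ((w.1:ℂ) * (((j - j' : ℤ)):ℂ))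
              * ep (2*n-1) ((w.2:ℂ) * (((k - k' : ℤ)):ℂ))
            = if j' = j then ((2*n-1:ℕ):ℂ) * ((2*n-1:ℕ):ℂ) * h i j' k else 0 := by
        intro j' hj'
        rw [Finset.sum_comm]
        have inner2 : ∀ k' ∈ Zf n,
            ∑ w ∈ Zf2 (2*n-1), h i j' k'
                * ep (2*n-1) ((w.1:ℂ) * (((j - j' : ℤ)):ℂ))
                * ep (2*n-1) ((w.2:ℂ) * (((k - k' : ℤ)):ℂ))
              = if k' = k then
                  (if j' = j then ((2*n-1:ℕ):ℂ) * ((2*n-1:ℕ):ℂ) * h i j' k' else 0)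
                else 0 := by
          intro k' hk'
          rw [Zf2]
          refine Eq.trans (sum_prod_fact (Zf (2*n-1)) (Zf (2*n-1)) (h i j' k')
            (fun u => ep (2*n-1) ((u:ℂ) * (((j - j' : ℤ)):ℂ)))
            (fun v => ep (2*n-1) ((v:ℂ) * (((k - k' : ℤ)):ℂ)))) ?_
          beta_reduce
          rw [hZp, hp, orth (2*ν) (j - j'), orth (2*ν) (k - k')]
          by_cases h1 : j' = j <;> by_cases h2 : k' = k
          · rw [if_pos ((dvd_small j j' hj hj').2 h1), if_pos ((dvd_small k k' hk hk').2 h2),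
              if_pos h2, if_pos h1]
            ring
          · rw [if_neg (fun hd => h2 ((dvd_small k k' hk hk').1 hd)), mul_zero, if_neg h2]
          · rw [if_neg (fun hd => h1 ((dvd_small j j' hj hj').1 hd)), mul_zero, zero_mul,
              if_pos h2, if_neg h1]
          · rw [if_neg (fun hd => h2 ((dvd_small k k' hk hk').1 hd)), mul_zero, if_neg h2]
        rw [Finset.sum_congr rfl inner2, Finset.sum_ite_eq' _ k, if_pos hk]
      rw [Finset.sum_congr rfl inner, Finset.sum_ite_eq' _ j, if_pos hj]
    rw [← hRHS, hLHS]
  -- evaluate pft at zero and close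
  have hpft00 : ∀ i : ℤ, pft n (2*n-1) h i 0 0 = ∑ j ∈ Zf n, ∑ k ∈ Zf n, h i j k := by
    intro i
    simp only [pft]
    apply Finset.sum_congr rfl; intro j _
    apply Finset.sum_congr rfl; intro k _
    rw [show -(((0:ℤ):ℂ)*(j:ℂ) + ((0:ℤ):ℂ)*(k:ℂ)) = 0 by push_cast; ring, ep_zero, mul_one]
  have hcardZn : ((Zf n).card : ℂ) = (n : ℂ) := by
    rw [hZn, Int.card_Icc]
    norm_cast
    omega
  have stepC : ∀ i ∈ Zf n, pft n (2*n-1) h i 0 0 = 0 := by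
    intro i hi
    have hsumB : ∑ j ∈ Zf n, ∑ k ∈ Zf n, (((2*n-1:ℕ):ℂ) * ((2*n-1:ℕ):ℂ) * h i j k)
        = ∑ j ∈ Zf n, ∑ k ∈ Zf n, pft n (2*n-1) h i 0 0 := by
      apply Finset.sum_congr rfl; intro j hj
      apply Finset.sum_congr rfl; intro k hk
      exact stepB i hi j hj k hk
    simp only [← Finset.mul_sum] at hsumB
    simp only [Finset.sum_const, nsmul_eq_mul] at hsumB
    rw [← hpft00 i, ← mul_assoc] at hsumB
    -- hsumB : (q * q) * pft = (card * card) * pft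
    have hne : ((2*n-1:ℕ):ℂ) * ((2*n-1:ℕ):ℂ) ≠ ((Zf n).card : ℂ) * ((Zf n).card : ℂ) := by
      rw [hcardZn]
      intro hcontra
      have : (((2*n-1)*(2*n-1) : ℕ) : ℂ) = ((n*n : ℕ) : ℂ) := by push_cast; linear_combination hcontra
      have h2 : (2*n-1)*(2*n-1) = n*n := Nat.cast_injective this
      nlinarith [h2, hn3]
    by_contra hne0
    exact hne (mul_right_cancel₀ hne0 hsumB)
  intro i j k
  by_cases hi : i ∈ Zf n
  · by_cases hj : j ∈ Zf n
    · by_cases hk : k ∈ Zf n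
      · have hB := stepB i hi j hj k hk
        rw [stepC i hi] at hB
        have hqne : ((2*n-1:ℕ):ℂ) ≠ 0 := Nat.cast_ne_zero.2 (by omega)
        rcases mul_eq_zero.1 hB with h1 | h1
        · exact absurd h1 (mul_ne_zero hqne hqne)
        · exact h1
      · exact hobj i j k (Or.inr (Or.inr hk))
    · exact hobj i j k (Or.inr (Or.inl hj))
  · exact hobj i j k (Or.inl hi)


lemma interp_sub (n : ℕ) (f g : ℤ → ℤ → ℤ → ℂ) (e : ℂ) (x y z : ℝ) :
    interp n (fun i j k => g i j k - e * f i j k) x y z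
      = interp n g x y z - e * interp n f x y z := by
  simp only [interp, Finset.mul_sum, ← Finset.sum_sub_distrib]
  apply Finset.sum_congr rfl; intro i _
  apply Finset.sum_congr rfl; intro j _
  apply Finset.sum_congr rfl; intro k _
  ring

lemma proj_sub (n : ℕ) (f g : ℤ → ℤ → ℤ → ℂ) (e : ℂ) (t : Dir) (c : ℤ × ℤ) :
    proj n (fun i j k => g i j k - e * f i j k) t c
      = proj n g t c - e * proj n f t c := by
  cases t <;>
    (simp only [proj]
     by_cases hc : c ∈ Zf2 (2*n-1)
     · rw [if_pos hc, if_pos hc, if_pos hc, Finset.mul_sum, ← Finset.sum_sub_distrib]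
       apply Finset.sum_congr rfl; intro i _
       rw [interp_sub]
     · rw [if_neg hc, if_neg hc, if_neg hc]; ring)

lemma interp_swap (n : ℕ) (f : ℤ → ℤ → ℤ → ℂ) (x y z : ℝ) :
    interp n (fun i j k => f j i k) x y z = interp n f y x z := by
  simp only [interp]
  rw [Finset.sum_comm]
  apply Finset.sum_congr rfl; intro i _
  apply Finset.sum_congr rfl; intro j _
  apply Finset.sum_congr rfl; intro k _
  ring

lemma interp_rot (n : ℕ) (f : ℤ → ℤ → ℤ → ℂ) (x y z : ℝ) :
    interp n (fun i j k => f j k i) x y z = interp n f y z x := by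
  simp only [interp]
  rw [Finset.sum_comm]
  apply Finset.sum_congr rfl; intro i _
  rw [Finset.sum_comm]
  apply Finset.sum_congr rfl; intro j _
  apply Finset.sum_congr rfl; intro k _
  ring

lemma proj_dy (n : ℕ) (f : ℤ → ℤ → ℤ → ℂ) (α β : ℝ) (c : ℤ × ℤ) :
    proj n f (Dir.dy α β) c = proj n (fun i j k => f j i k) (Dir.dx α β) c := by
  simp only [proj]
  by_cases hc : c ∈ Zf2 (2*n-1)
  · rw [if_pos hc, if_pos hc]
    apply Finset.sum_congr rfl; intro i _
    exact (interp_swap n f _ _ _).symm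
  · rw [if_neg hc, if_neg hc]

lemma proj_dz (n : ℕ) (f : ℤ → ℤ → ℤ → ℂ) (α β : ℝ) (c : ℤ × ℤ) :
    proj n f (Dir.dz α β) c = proj n (fun i j k => f j k i) (Dir.dx α β) c := by
  simp only [proj]
  by_cases hc : c ∈ Zf2 (2*n-1)
  · rw [if_pos hc, if_pos hc]
    apply Finset.sum_congr rfl; intro k _
    exact (interp_rot n f _ _ _).symm
  · rw [if_neg hc, if_neg hc]


/-- Uniqueness for discrete projection tomography. -/
theorem projection_tomography_unique
    (n : ℕ) (hn : Odd n) (hn3 : 3 ≤ n)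
    (f g : ℤ → ℤ → ℤ → ℂ) (hf : IsObj n f) (hg : IsObj n g)
    (α β : Fin n → ℝ) (hdiv : Diversity n α β)
    (θ₀ : ℝ)
    (hT : (∀ l : Fin n, ∀ m ∈ Zf2 (2 * n - 1),
            proj n g (Dir.dx (α l) (β l)) m
              = Complex.exp (Complex.I * (θ₀ : ℂ)) * proj n f (Dir.dx (α l) (β l)) m) ∨
          (∀ l : Fin n, ∀ m ∈ Zf2 (2 * n - 1),
            proj n g (Dir.dy (α l) (β l)) m
              = Complex.exp (Complex.I * (θ₀ : ℂ)) * proj n f (Dir.dy (α l) (β l)) m) ∨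
          (∀ l : Fin n, ∀ m ∈ Zf2 (2 * n - 1),
            proj n g (Dir.dz (α l) (β l)) m
              = Complex.exp (Complex.I * (θ₀ : ℂ)) * proj n f (Dir.dz (α l) (β l)) m)) :
    ∀ i j k : ℤ, g i j k = Complex.exp (Complex.I * (θ₀ : ℂ)) * f i j k := by
  obtain ⟨ν, hν⟩ := hn
  have hobj : IsObj n
      (fun i j k => g i j k - Complex.exp (Complex.I * (θ₀ : ℂ)) * f i j k) := by
    intro i j k hor
    simp only
    rw [hf i j k hor, hg i j k hor, mul_zero, sub_zero]
  rcases hT with hT | hT | hT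
  · intro i j k
    have hz := core n ν hν hn3 _ hobj α β hdiv (fun l c hc => by
      rw [proj_sub, hT l c hc]; ring)
    exact sub_eq_zero.1 (hz i j k)
  · intro i j k
    have hz := core n ν hν hn3
      (fun i j k => g j i k - Complex.exp (Complex.I * (θ₀ : ℂ)) * f j i k)
      (fun i j k hor => hobj j i k (by tauto)) α β hdiv
      (fun l c hc => by
        have h1 : proj n (fun i j k => g i j k - Complex.exp (Complex.I * (θ₀ : ℂ)) * f i j k)
            (Dir.dy (α l) (β l)) c = 0 := by
          rw [proj_sub, hT l c hc]; ring
        have h2 := proj_dy n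
          (fun i j k => g i j k - Complex.exp (Complex.I * (θ₀ : ℂ)) * f i j k) (α l) (β l) c
        rw [h2] at h1
        exact h1)
    exact sub_eq_zero.1 (hz j i k)
  · intro i j k
    have hz := core n ν hν hn3
      (fun i j k => g j k i - Complex.exp (Complex.I * (θ₀ : ℂ)) * f j k i)
      (fun i j k hor => hobj j k i (by tauto)) α β hdiv
      (fun l c hc => by
        have h1 : proj n (fun i j k => g i j k - Complex.exp (Complex.I * (θ₀ : ℂ)) * f i j k)
            (Dir.dz (α l) (β l)) c = 0 := by
          rw [proj_sub, hT l c hc]; ring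
        have h2 := proj_dz n
          (fun i j k => g i j k - Complex.exp (Complex.I * (θ₀ : ℂ)) * f i j k) (α l) (β l) c
        rw [h2] at h1
        exact h1)
    exact sub_eq_zero.1 (hz k i j)


end Tomo3D
end
end
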